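/- The 2-dimensional Lebesgue measure of the set of pairs (s,t) in the unit square [0,1]² for which the three lengths p = min(s,t), q = |s-t| and r = 1-max(s,t) satisfy pq + qr + rp > max(p², q², r²) equals (24√7/49)·arcsin(√14/8) − 2/7. (This is the probability that the three pieces of a broken stick are the excircle radii of an acute triangle.) -/

import Mathlib

open MeasureTheory Real Set

noncomputable section

/-! ### Auxiliary definitions -/

def bsT : Set (ℝ×ℝ) := {x | 0 ≤ x.1 ∧ 0 ≤ x.2 ∧ x.1 + x.2 ≤ 1 ∧
  max (x.1^2) (max (x.2^2) ((1 - x.1 - x.2)^2)) < x.1*x.2 + x.2*(1 - x.1 - x.2) + (1 - x.1 - x.2)*x.1}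

def bsB : Set (ℝ×ℝ) := {x | x ∈ bsT ∧ x.2 ≤ x.1 ∧ 1 - x.1 - x.2 ≤ x.1}

def bsF (p : ℝ) : ℝ := ((1-p) - Real.sqrt (1+2*p-7*p^2))/2
def bsG (p : ℝ) : ℝ := ((1-p) + Real.sqrt (1+2*p-7*p^2))/2

def bsB1 : Set (ℝ×ℝ) := regionBetween (fun p => 1-2*p) (fun p => p) (Ioo (1/3) (1/2))
def bsB2 : Set (ℝ×ℝ) := regionBetween bsF bsG (Ioo (1/2) ((1+2*Real.sqrt 2)/7))

def bsZ : Set (ℝ×ℝ) :=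
  {x | x.1 = 1/3} ∪ {x | x.1 = 1/2} ∪ {x | x.2 = x.1} ∪ {x | x.2 = 1-2*x.1}

lemma bs_max_lt {a b c d : ℝ} : max a (max b c) < d ↔ a < d ∧ b < d ∧ c < d := by
  rw [max_lt_iff, max_lt_iff]

lemma bs_union_null {α : Type*} [MeasurableSpace α] {μ : Measure α} {s t : Set α}
    (h : μ t = 0) : μ (s ∪ t) = μ s :=
  le_antisymm ((measure_union_le s t).trans (by rw [h, add_zero])) (measure_mono subset_union_left)

/-! ### Null sets -/

lemma bs_graph_null (h : ℝ → ℝ) (hm : Measurable h) :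
    volume {x : ℝ × ℝ | x.2 = h x.1} = 0 := by
  have hset : MeasurableSet {x : ℝ × ℝ | x.2 = h x.1} :=
    measurableSet_eq_fun measurable_snd (hm.comp measurable_fst)
  rw [show (volume : Measure (ℝ × ℝ)) = (volume : Measure ℝ).prod volume from
    (Measure.volume_eq_prod ℝ ℝ)]
  rw [Measure.measure_prod_null hset]
  refine Filter.Eventually.of_forall fun x => ?_
  have : Prod.mk x ⁻¹' {p : ℝ × ℝ | p.2 = h p.1} = {h x} := by
    ext y; simp [Set.mem_singleton_iff]
  simp [this]

lemma bs_line_null (c : ℝ) : volume {x : ℝ × ℝ | x.1 = c} = 0 := by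
  have : {x : ℝ × ℝ | x.1 = c} = ({c} : Set ℝ) ×ˢ (univ : Set ℝ) := by
    ext x; simp [Set.mem_prod, eq_comm, Prod.ext_iff]
  rw [this, show (volume : Measure (ℝ × ℝ)) = (volume : Measure ℝ).prod volume from
    (Measure.volume_eq_prod ℝ ℝ), Measure.prod_prod]
  simp

lemma bsZ_null : volume bsZ = 0 := by
  unfold bsZ
  refine measure_union_null (measure_union_null (measure_union_null ?_ ?_) ?_) ?_
  · exact bs_line_null _
  · exact bs_line_null _
  · simpa using bs_graph_null (fun t => t) measurable_id
  · simpa using bs_graph_null (fun t => 1-2*t) (by fun_prop)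

/-! ### Measure preserving maps -/

lemma bs_mp_swap : MeasurePreserving (Prod.swap : ℝ × ℝ → ℝ × ℝ) volume volume := by
  rw [show (volume : Measure (ℝ × ℝ)) = (volume : Measure ℝ).prod volume from
    (Measure.volume_eq_prod ℝ ℝ)]
  exact Measure.measurePreserving_swap

lemma bs_mp_shear : MeasurePreserving (fun z : ℝ × ℝ => (z.1, z.2 - z.1)) volume volume := by
  rw [show (volume : Measure (ℝ × ℝ)) = (volume : Measure ℝ).prod volume from
    (Measure.volume_eq_prod ℝ ℝ)]
  exact measurePreserving_prod_sub _ _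

lemma bs_mp_f : MeasurePreserving (fun z : ℝ × ℝ => (1 - z.1 - z.2, z.2)) volume volume := by
  have h1 : MeasurePreserving (fun z : ℝ × ℝ => (z.1 + z.2, z.2)) volume volume := by
    rw [show (volume : Measure (ℝ × ℝ)) = (volume : Measure ℝ).prod volume from
      (Measure.volume_eq_prod ℝ ℝ)]
    exact measurePreserving_add_prod _ _
  have h2 : MeasurePreserving (fun z : ℝ × ℝ => (-z.1, z.2)) volume volume := by
    rw [show (volume : Measure (ℝ × ℝ)) = (volume : Measure ℝ).prod volume from
      (Measure.volume_eq_prod ℝ ℝ)]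
    exact (Measure.measurePreserving_neg _).prod (MeasurePreserving.id _)
  have h3 : MeasurePreserving (fun z : ℝ × ℝ => (z.1 + 1, z.2)) volume volume := by
    rw [show (volume : Measure (ℝ × ℝ)) = (volume : Measure ℝ).prod volume from
      (Measure.volume_eq_prod ℝ ℝ)]
    exact (measurePreserving_add_right _ 1).prod (MeasurePreserving.id _)
  have : (fun z : ℝ × ℝ => (1 - z.1 - z.2, z.2)) =
      (fun z : ℝ × ℝ => (z.1 + 1, z.2)) ∘ (fun z : ℝ × ℝ => (-z.1, z.2)) ∘
      (fun z : ℝ × ℝ => (z.1 + z.2, z.2)) := by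
    funext z; simp [Function.comp]; ring
  rw [this]
  exact (h3.comp h2).comp h1

/-! ### Three-fold union -/

lemma bs_union3 {A B C : Set (ℝ × ℝ)} (hA : MeasurableSet A) (hB : MeasurableSet B)
    (hC : MeasurableSet C) (hAB : volume (A ∩ B) = 0) (hAC : volume (A ∩ C) = 0)
    (hBC : volume (B ∩ C) = 0) :
    volume (A ∪ B ∪ C) = volume A + volume B + volume C := by
  have e1 : volume (B \ A) = volume B := by
    rw [show B \ A = B \ (A ∩ B) by ext x; simp (config := {contextual := true}) [and_comm]]
    exact measure_diff_null hAB
  have e2 : volume (C \ (A ∪ B)) = volume C := by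
    rw [show C \ (A ∪ B) = C \ ((A ∩ C) ∪ (B ∩ C)) by ext x; simp; tauto]
    exact measure_diff_null (measure_union_null hAC hBC)
  calc volume (A ∪ B ∪ C)
      = volume ((A ∪ B) ∪ C \ (A ∪ B)) := by rw [union_diff_self]
    _ = volume (A ∪ B) + volume (C \ (A ∪ B)) :=
        measure_union disjoint_sdiff_right (hC.diff (hA.union hB))
    _ = volume (A ∪ B \ A) + volume (C \ (A ∪ B)) := by rw [union_diff_self]
    _ = volume A + volume (B \ A) + volume (C \ (A ∪ B)) := by
        rw [measure_union disjoint_sdiff_right (hB.diff hA)]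
    _ = volume A + volume B + volume C := by rw [e1, e2]

/-! ### Measurability -/

lemma bsT_meas : MeasurableSet bsT := by
  have h1 : Measurable fun x : ℝ×ℝ => max (x.1^2) (max (x.2^2) ((1 - x.1 - x.2)^2)) := by fun_prop
  have h2 : Measurable fun x : ℝ×ℝ => x.1*x.2 + x.2*(1 - x.1 - x.2) + (1 - x.1 - x.2)*x.1 := by
    fun_prop
  exact (measurableSet_le measurable_const measurable_fst).inter
    ((measurableSet_le measurable_const measurable_snd).inter
      ((measurableSet_le (measurable_fst.add measurable_snd) measurable_const).inter
        (measurableSet_lt h1 h2)))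

lemma bsB_meas : MeasurableSet bsB := by
  unfold bsB
  apply MeasurableSet.inter
  · exact bsT_meas
  apply MeasurableSet.inter
  · exact measurableSet_le measurable_snd measurable_fst
  · exact measurableSet_le ((measurable_const.sub measurable_fst).sub measurable_snd) measurable_fst

lemma bsF_cont : Continuous bsF := by unfold bsF; fun_prop
lemma bsG_cont : Continuous bsG := by unfold bsG; fun_prop

lemma bsB1_meas : MeasurableSet bsB1 :=
  measurableSet_regionBetween (by fun_prop) (by fun_prop) measurableSet_Ioo

lemma bsB2_meas : MeasurableSet bsB2 :=
  measurableSet_regionBetween bsF_cont.measurable bsG_cont.measurable measurableSet_Ioo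

/-! ### Symmetries of the simplex region -/

lemma bsT_swap : Prod.swap ⁻¹' bsT = bsT := by
  ext x
  simp only [bsT, mem_preimage, mem_setOf_eq, Prod.fst_swap, Prod.snd_swap, bs_max_lt]
  constructor <;> rintro ⟨h1, h2, h3, h4, h5, h6⟩ <;>
    exact ⟨h2, h1, by linarith, by nlinarith, by nlinarith, by nlinarith⟩

lemma bsT_f : (fun z : ℝ×ℝ => (1 - z.1 - z.2, z.2)) ⁻¹' bsT = bsT := by
  ext x
  simp only [bsT, mem_preimage, mem_setOf_eq, bs_max_lt]
  constructor <;> rintro ⟨h1, h2, h3, h4, h5, h6⟩ <;>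
    refine ⟨by linarith, h2, by linarith, by nlinarith, by nlinarith, by nlinarith⟩

lemma bsT_decomp : bsT = bsB ∪ Prod.swap ⁻¹' bsB ∪ (fun z : ℝ×ℝ => (1 - z.1 - z.2, z.2)) ⁻¹' bsB := by
  ext x
  constructor
  · intro hx
    rcases le_total (1 - x.1 - x.2) x.2 with h1 | h1
    · rcases le_total x.2 x.1 with h2 | h2
      · exact Or.inl (Or.inl ⟨hx, h2, by linarith⟩)
      · refine Or.inl (Or.inr ?_)
        simp only [mem_preimage, bsB, mem_setOf_eq, Prod.fst_swap, Prod.snd_swap]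
        rw [show Prod.swap x ∈ bsT ↔ x ∈ Prod.swap ⁻¹' bsT from Iff.rfl, bsT_swap]
        exact ⟨hx, h2, by linarith⟩
    · rcases le_total (1 - x.1 - x.2) x.1 with h2 | h2
      · exact Or.inl (Or.inl ⟨hx, by linarith, h2⟩)
      · refine Or.inr ?_
        simp only [mem_preimage, bsB, mem_setOf_eq]
        rw [show (1 - x.1 - x.2, x.2) ∈ bsT ↔ x ∈ (fun z : ℝ×ℝ => (1 - z.1 - z.2, z.2)) ⁻¹' bsT
          from Iff.rfl, bsT_f]
        exact ⟨hx, show x.2 ≤ 1 - x.1 - x.2 from h1,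
          show 1 - (1 - x.1 - x.2) - x.2 ≤ 1 - x.1 - x.2 by linarith⟩
  · rintro ((h | h) | h)
    · exact h.1
    · have := h.1
      try simp only [mem_preimage] at this ⊢
      rw [show Prod.swap x ∈ bsT ↔ x ∈ Prod.swap ⁻¹' bsT from Iff.rfl, bsT_swap] at this
      exact this
    · have := h.1
      simp only [mem_preimage] at this
      rw [show (1 - x.1 - x.2, x.2) ∈ bsT ↔ x ∈ (fun z : ℝ×ℝ => (1 - z.1 - z.2, z.2)) ⁻¹' bsT
        from Iff.rfl, bsT_f] at this
      exact this

lemma bsT_inter1 : volume (bsB ∩ Prod.swap ⁻¹' bsB) = 0 := by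
  refine measure_mono_null ?_ (by simpa using bs_graph_null (fun t => t) measurable_id)
  rintro x ⟨h1, h2⟩
  have ha : x.2 ≤ x.1 := h1.2.1
  have hb : x.1 ≤ x.2 := h2.2.1
  exact le_antisymm ha hb

lemma bsT_inter2 : volume (bsB ∩ (fun z : ℝ×ℝ => (1 - z.1 - z.2, z.2)) ⁻¹' bsB) = 0 := by
  refine measure_mono_null ?_ (by simpa using bs_graph_null (fun t => 1-2*t) (by fun_prop))
  rintro x ⟨h1, h2⟩
  have ha : 1 - x.1 - x.2 ≤ x.1 := h1.2.2
  have hb : 1 - (1 - x.1 - x.2) - x.2 ≤ 1 - x.1 - x.2 := h2.2.2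
  show x.2 = 1 - 2*x.1
  linarith

lemma bsT_inter3 :
    volume ((Prod.swap ⁻¹' bsB) ∩ (fun z : ℝ×ℝ => (1 - z.1 - z.2, z.2)) ⁻¹' bsB) = 0 := by
  refine measure_mono_null ?_ (by simpa using bs_graph_null (fun t => (1-t)/2) (by fun_prop))
  rintro x ⟨h1, h2⟩
  have ha : 1 - x.2 - x.1 ≤ x.2 := h1.2.2
  have hb : x.2 ≤ 1 - x.1 - x.2 := h2.2.1
  show x.2 = (1-x.1)/2
  linarith

/-! ### bsB versus the two regions between graphs -/

lemma bsB1_sub : bsB1 ⊆ bsB := by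
  rintro x ⟨hp, hq⟩
  simp only [mem_Ioo] at hp hq
  obtain ⟨hp1, hp2⟩ := hp
  obtain ⟨hq1, hq2⟩ := hq
  have hr1 : 1 - 2*x.1 < 1 - x.1 - x.2 := by linarith
  have hr2 : 1 - x.1 - x.2 < x.1 := by linarith
  refine ⟨⟨by linarith, by linarith, by linarith, ?_⟩, by linarith, by linarith⟩
  rw [bs_max_lt]
  have hqr : 0 < x.2 * (1 - x.1 - x.2) := mul_pos (by linarith) (by linarith)
  refine ⟨by nlinarith, by nlinarith, by nlinarith⟩

lemma bsB2_sub : bsB2 ⊆ bsB := by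
  rintro x ⟨hp, hq⟩
  simp only [mem_Ioo] at hp hq
  obtain ⟨hp1, hp2⟩ := hp
  obtain ⟨hq1, hq2⟩ := hq
  have h2 : Real.sqrt 2 ^ 2 = 2 := Real.sq_sqrt (by norm_num)
  have h2n : (0:ℝ) < Real.sqrt 2 := Real.sqrt_pos.mpr (by norm_num)
  set D : ℝ := 1 + 2*x.1 - 7*x.1^2 with hD
  have hDpos : 0 < D := by nlinarith
  have hsq : Real.sqrt D ^ 2 = D := Real.sq_sqrt hDpos.le
  have hp1' : x.1 < 1 := by nlinarith
  have hslt : Real.sqrt D < 1 - x.1 := by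
    rw [Real.sqrt_lt' (by linarith)]
    nlinarith
  rw [bsF] at hq1
  rw [bsG] at hq2
  have hq0 : 0 < x.2 := by linarith
  have hr0 : 0 < 1 - x.1 - x.2 := by linarith
  have hqp : x.2 < x.1 := by linarith
  have hrp : 1 - x.1 - x.2 < x.1 := by linarith
  have hsqlt : (2*x.2 - (1 - x.1))^2 < D := by
    have := sq_lt_sq' (by linarith : -Real.sqrt D < 2*x.2 - (1 - x.1))
      (by linarith : 2*x.2 - (1 - x.1) < Real.sqrt D)
    calc (2*x.2 - (1 - x.1))^2 < Real.sqrt D ^ 2 := this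
      _ = D := hsq
  refine ⟨⟨by linarith, by linarith, by linarith, ?_⟩, by linarith, by linarith⟩
  rw [bs_max_lt]
  refine ⟨by nlinarith, by nlinarith, by nlinarith⟩

lemma bsB_sub : bsB ⊆ bsB1 ∪ bsB2 ∪ bsZ := by
  rintro x ⟨⟨h0p, h0q, hsum, hcond⟩, hqp, hrp⟩
  rw [bs_max_lt] at hcond
  obtain ⟨hc1, hc2, hc3⟩ := hcond
  have h2 : Real.sqrt 2 ^ 2 = 2 := Real.sq_sqrt (by norm_num)
  have h2n : (0:ℝ) < Real.sqrt 2 := Real.sqrt_pos.mpr (by norm_num)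
  have h13 : 1/3 ≤ x.1 := by linarith
  rcases eq_or_lt_of_le h13 with h | h
  · exact Or.inr (Or.inl (Or.inl (Or.inl h.symm)))
  rcases lt_trichotomy x.1 (1/2) with h12 | h12 | h12
  · rcases eq_or_lt_of_le hqp with hq | hq
    · exact Or.inr (Or.inl (Or.inr hq))
    rcases eq_or_lt_of_le (show 1 - 2*x.1 ≤ x.2 by linarith) with hq2 | hq2
    · exact Or.inr (Or.inr hq2.symm)
    · exact Or.inl (Or.inl ⟨⟨h, h12⟩, hq2, hq⟩)
  · exact Or.inr (Or.inl (Or.inl (Or.inr h12)))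
  · -- p > 1/2 : x ∈ bsB2
    refine Or.inl (Or.inr ?_)
    clear hc2 hc3 h13 h
    have hkey : (2*x.2 - (1 - x.1))^2 < 1 + 2*x.1 - 7*x.1^2 := by linarith
    clear hc1
    have hDpos : 0 < 1 + 2*x.1 - 7*x.1^2 := lt_of_le_of_lt (sq_nonneg _) hkey
    have hsq : Real.sqrt (1 + 2*x.1 - 7*x.1^2) ^ 2 = 1 + 2*x.1 - 7*x.1^2 :=
      Real.sq_sqrt hDpos.le
    have hpstar : x.1 < (1 + 2*Real.sqrt 2)/7 := by
      by_contra hc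
      push_neg at hc
      nlinarith
    have habs : |2*x.2 - (1 - x.1)| < Real.sqrt (1 + 2*x.1 - 7*x.1^2) := by
      have := Real.sqrt_lt_sqrt (sq_nonneg (2*x.2 - (1 - x.1))) hkey
      rwa [Real.sqrt_sq_eq_abs] at this
    obtain ⟨hl, hr⟩ := abs_lt.mp habs
    refine ⟨⟨h12, hpstar⟩, ?_, ?_⟩
    · rw [bsF]; linarith
    · rw [bsG]; linarith

/-! ### The two integrals -/

lemma bs_antideriv (a : ℝ) (ha : -1 ≤ a) (ha1 : a ≤ 1) :
    ∫ x in a..1, Real.sqrt (1 - x^2) =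
      π/4 - (Real.arcsin a + a * Real.sqrt (1 - a^2))/2 := by
  have key : ∫ x in a..1, Real.sqrt (1 - x^2) =
      (Real.arcsin 1 + 1 * Real.sqrt (1 - 1^2))/2 - (Real.arcsin a + a * Real.sqrt (1 - a^2))/2 := by
    apply intervalIntegral.integral_eq_sub_of_hasDeriv_right_of_le
      (f := fun x => (Real.arcsin x + x * Real.sqrt (1 - x^2))/2)
      (f' := fun x => Real.sqrt (1 - x^2)) ha1
    · apply ContinuousOn.div_const
      apply ContinuousOn.add
      · exact Real.continuous_arcsin.continuousOn
      · exact (continuous_id.mul ((continuous_const.sub (continuous_pow 2)).sqrt)).continuousOn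
    · intro x hx
      have hx1 : -1 < x := lt_of_le_of_lt ha hx.1
      have hx2 : x < 1 := hx.2
      have hs : (0:ℝ) < 1 - x^2 := by nlinarith
      have hsq : Real.sqrt (1 - x^2) ^ 2 = 1 - x^2 := Real.sq_sqrt hs.le
      have hspos : 0 < Real.sqrt (1 - x^2) := Real.sqrt_pos.mpr hs
      have h1 : HasDerivAt Real.arcsin (1 / Real.sqrt (1 - x^2)) x :=
        Real.hasDerivAt_arcsin hx1.ne' hx2.ne
      have h2 : HasDerivAt (fun y : ℝ => 1 - y^2) (-(2*x)) x := by
        simpa using ((hasDerivAt_pow 2 x).const_sub 1)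
      have h3 : HasDerivAt (fun y : ℝ => Real.sqrt (1 - y^2))
          (1 / (2 * Real.sqrt (1 - x^2)) * (-(2*x))) x :=
        (Real.hasDerivAt_sqrt hs.ne').comp x h2
      have h4 : HasDerivAt (fun y : ℝ => y * Real.sqrt (1 - y^2))
          (1 * Real.sqrt (1 - x^2) + x * (1 / (2 * Real.sqrt (1 - x^2)) * (-(2*x)))) x :=
        (hasDerivAt_id x).mul h3
      have h5 := (h1.add h4).div_const 2
      convert h5.hasDerivWithinAt using 1
      · rfl
      field_simp
      nlinarith [hsq, hspos]
    · exact ((continuous_const.sub (continuous_pow 2)).sqrt).intervalIntegrable a 1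
  rw [key, Real.arcsin_one]
  norm_num
  ring

lemma bs_arcsin : Real.arcsin (5*Real.sqrt 2/8) = π/2 - Real.arcsin (Real.sqrt 14/8) := by
  have h2 : Real.sqrt 2 ^ 2 = 2 := Real.sq_sqrt (by norm_num)
  have h2n : (0:ℝ) ≤ Real.sqrt 2 := Real.sqrt_nonneg 2
  have hv1 : 5*Real.sqrt 2/8 ≤ 1 := by nlinarith
  have hv0 : (0:ℝ) ≤ 5*Real.sqrt 2/8 := by positivity
  have hcos : Real.cos (Real.arcsin (5*Real.sqrt 2/8)) = Real.sqrt 14/8 := by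
    rw [Real.cos_arcsin]
    rw [show 1 - (5*Real.sqrt 2/8)^2 = 14/64 by nlinarith]
    rw [show (14:ℝ)/64 = (Real.sqrt 14/8)^2 by
      rw [div_pow, Real.sq_sqrt]; norm_num; norm_num]
    exact Real.sqrt_sq (by positivity)
  have hθ1 : Real.arcsin (5*Real.sqrt 2/8) ≤ π/2 := Real.arcsin_le_pi_div_two _
  have hθ0 : 0 ≤ Real.arcsin (5*Real.sqrt 2/8) := Real.arcsin_nonneg.mpr hv0
  have : Real.arcsin (Real.sqrt 14/8) = π/2 - Real.arcsin (5*Real.sqrt 2/8) := by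
    rw [← hcos, ← Real.sin_pi_div_two_sub]
    exact Real.arcsin_sin (by linarith) (by linarith)
  linarith

lemma bs_I2 : ∫ p in (1/2 : ℝ)..((1+2*Real.sqrt 2)/7), Real.sqrt (1+2*p-7*p^2)
    = 4*Real.sqrt 7/49 * Real.arcsin (Real.sqrt 14/8) - 5/56 := by
  have h2 : Real.sqrt 2 ^ 2 = 2 := Real.sq_sqrt (by norm_num)
  have h2n : (0:ℝ) < Real.sqrt 2 := Real.sqrt_pos.mpr (by norm_num)
  have h7 : Real.sqrt 7 ^ 2 = 7 := Real.sq_sqrt (by norm_num)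
  have h7n : (0:ℝ) < Real.sqrt 7 := Real.sqrt_pos.mpr (by norm_num)
  set R : ℝ := 2*Real.sqrt 2/7 with hR
  have hRpos : 0 < R := by positivity
  have hR2 : R^2 = 8/49 := by rw [hR]; rw [div_pow, mul_pow]; rw [h2]; norm_num
  have hint : ∀ p : ℝ, Real.sqrt (1+2*p-7*p^2)
      = Real.sqrt 7 * R * Real.sqrt (1 - ((p - 1/7)/R)^2) := by
    intro p
    have e : 1+2*p-7*p^2 = (7*R^2) * (1 - ((p-1/7)/R)^2) := by
      field_simp
      nlinarith [hR2]
    rw [e, Real.sqrt_mul (by positivity)]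
    congr 1
    rw [show 7*R^2 = (Real.sqrt 7 * R)^2 by rw [mul_pow, h7]]
    exact Real.sqrt_sq (by positivity)
  rw [intervalIntegral.integral_congr
    (g := fun p => Real.sqrt 7 * R * Real.sqrt (1 - ((p - 1/7)/R)^2)) (fun p _ => hint p)]
  rw [intervalIntegral.integral_const_mul]
  rw [show (fun p : ℝ => Real.sqrt (1 - ((p - 1/7)/R)^2)) =
    fun p => (fun y => Real.sqrt (1 - (y/R)^2)) (p - 1/7) from rfl]
  rw [intervalIntegral.integral_comp_sub_right (fun y => Real.sqrt (1 - (y/R)^2)) (1/7)]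
  rw [intervalIntegral.integral_comp_div (fun y => Real.sqrt (1 - y^2)) hRpos.ne']
  rw [show ((1+2*Real.sqrt 2)/7 - 1/7)/R = 1 by rw [hR]; field_simp; ring]
  rw [show ((1:ℝ)/2 - 1/7)/R = 5*Real.sqrt 2/8 by
    rw [hR]; rw [div_eq_iff (by positivity)]; nlinarith]
  rw [bs_antideriv _ (by nlinarith) (by nlinarith)]
  rw [bs_arcsin]
  have h14 : Real.sqrt 14 ^ 2 = 14 := Real.sq_sqrt (by norm_num)
  rw [show 1 - (5*Real.sqrt 2/8)^2 = (Real.sqrt 14/8)^2 by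
    rw [div_pow, mul_pow, div_pow, h2, h14]; norm_num]
  rw [Real.sqrt_sq (by positivity)]
  have h214 : Real.sqrt 2 * Real.sqrt 14 = 2 * Real.sqrt 7 := by
    rw [← Real.sqrt_mul (by norm_num)]
    rw [show (2:ℝ)*14 = 4*7 by norm_num]
    rw [Real.sqrt_mul (by norm_num), show Real.sqrt 4 = 2 by
      rw [show (4:ℝ) = 2^2 by norm_num, Real.sqrt_sq]; norm_num]
  rw [hR]
  rw [smul_eq_mul]
  linear_combination ((2/49)*Real.sqrt 7 * Real.arcsin (Real.sqrt 14/8) - 35/784) * h2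
    - (5/1568)*Real.sqrt 2^2*Real.sqrt 7 * h214 - (5/784)*Real.sqrt 2^2 * h7

/-! ### Volumes of the two pieces -/

lemma bsB1_vol : volume bsB1 = ENNReal.ofReal (1/24) := by
  rw [bsB1, Measure.volume_eq_prod, volume_regionBetween_eq_integral
    (((by fun_prop : Continuous fun p : ℝ => 1-2*p)).integrableOn_Icc.mono_set Ioo_subset_Icc_self)
    (((by fun_prop : Continuous fun p : ℝ => p)).integrableOn_Icc.mono_set Ioo_subset_Icc_self)
    measurableSet_Ioo (fun x hx => by simp only [mem_Ioo] at hx; linarith [hx.1, hx.2])]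
  congr 1
  rw [← integral_Ioc_eq_integral_Ioo, ← intervalIntegral.integral_of_le (by norm_num : (1/3:ℝ) ≤ 1/2)]
  rw [intervalIntegral.integral_congr (g := fun x : ℝ => 3*x - 1)
    (by intro x _; simp [Pi.sub_apply]; ring)]
  rw [intervalIntegral.integral_sub
    (((by fun_prop : Continuous fun x : ℝ => 3*x)).intervalIntegrable _ _) (intervalIntegrable_const)]
  rw [intervalIntegral.integral_const_mul, integral_id, intervalIntegral.integral_const]
  norm_num

lemma bs_half_le : (1/2:ℝ) ≤ (1+2*Real.sqrt 2)/7 := by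
  nlinarith [Real.sq_sqrt (show (0:ℝ) ≤ 2 by norm_num), Real.sqrt_nonneg 2]

lemma bsB2_vol : volume bsB2 =
    ENNReal.ofReal (4*Real.sqrt 7/49 * Real.arcsin (Real.sqrt 14/8) - 5/56) := by
  rw [bsB2, Measure.volume_eq_prod, volume_regionBetween_eq_integral
    (bsF_cont.integrableOn_Icc.mono_set Ioo_subset_Icc_self)
    (bsG_cont.integrableOn_Icc.mono_set Ioo_subset_Icc_self)
    measurableSet_Ioo
    (fun x _ => by rw [bsF, bsG]; have := Real.sqrt_nonneg (1+2*x-7*x^2); linarith)]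
  rw [← bs_I2]
  congr 1
  rw [← integral_Ioc_eq_integral_Ioo, ← intervalIntegral.integral_of_le bs_half_le]
  apply intervalIntegral.integral_congr
  intro x _
  rw [Pi.sub_apply, bsF, bsG]
  ring

lemma bs_c_nonneg : 0 ≤ 4*Real.sqrt 7/49 * Real.arcsin (Real.sqrt 14/8) - 5/56 := by
  rw [← bs_I2]
  apply intervalIntegral.integral_nonneg bs_half_le
  intro x _
  exact Real.sqrt_nonneg _

lemma bsB_vol : volume bsB =
    ENNReal.ofReal (1/24 + (4*Real.sqrt 7/49 * Real.arcsin (Real.sqrt 14/8) - 5/56)) := by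
  have hdisj : Disjoint bsB1 bsB2 := by
    rw [Set.disjoint_left]
    rintro x ⟨hp, _⟩ ⟨hp', _⟩
    simp only [mem_Ioo] at hp hp'
    linarith [hp.2, hp'.1]
  have h12 : volume (bsB1 ∪ bsB2) = volume bsB1 + volume bsB2 :=
    measure_union hdisj bsB2_meas
  have hvol : volume bsB = volume (bsB1 ∪ bsB2) := by
    apply le_antisymm
    · calc volume bsB ≤ volume (bsB1 ∪ bsB2 ∪ bsZ) := measure_mono bsB_sub
        _ = volume (bsB1 ∪ bsB2) := bs_union_null bsZ_null
    · exact measure_mono (union_subset bsB1_sub bsB2_sub)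
  rw [hvol, h12, bsB1_vol, bsB2_vol, ← ENNReal.ofReal_add (by norm_num) bs_c_nonneg]

lemma bsT_vol : volume bsT =
    ENNReal.ofReal (1/24 + (4*Real.sqrt 7/49 * Real.arcsin (Real.sqrt 14/8) - 5/56)) +
    ENNReal.ofReal (1/24 + (4*Real.sqrt 7/49 * Real.arcsin (Real.sqrt 14/8) - 5/56)) +
    ENNReal.ofReal (1/24 + (4*Real.sqrt 7/49 * Real.arcsin (Real.sqrt 14/8) - 5/56)) := by
  have hswB : volume (Prod.swap ⁻¹' bsB) = volume bsB :=
    bs_mp_swap.measure_preimage bsB_meas.nullMeasurableSet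
  have hfB : volume ((fun z : ℝ×ℝ => (1 - z.1 - z.2, z.2)) ⁻¹' bsB) = volume bsB :=
    bs_mp_f.measure_preimage bsB_meas.nullMeasurableSet
  rw [bsT_decomp, bs_union3 bsB_meas (bs_mp_swap.measurable bsB_meas)
    (bs_mp_f.measurable bsB_meas) bsT_inter1 bsT_inter2 bsT_inter3, hswB, hfB, bsB_vol]

end

/-! ### Main theorem -/

theorem broken_stick_excircle_acute_prob :
    volume {p : ℝ × ℝ | p.1 ∈ Set.Icc (0:ℝ) 1 ∧ p.2 ∈ Set.Icc (0:ℝ) 1 ∧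
      min p.1 p.2 * |p.1 - p.2| + |p.1 - p.2| * (1 - max p.1 p.2) +
        (1 - max p.1 p.2) * min p.1 p.2 >
      max (min p.1 p.2 ^ 2) (max (|p.1 - p.2| ^ 2) ((1 - max p.1 p.2) ^ 2))} =
    ENNReal.ofReal (24 * Real.sqrt 7 / 49 * Real.arcsin (Real.sqrt 14 / 8) - 2 / 7) := by
  set S : Set (ℝ × ℝ) := {p : ℝ × ℝ | p.1 ∈ Set.Icc (0:ℝ) 1 ∧ p.2 ∈ Set.Icc (0:ℝ) 1 ∧
      min p.1 p.2 * |p.1 - p.2| + |p.1 - p.2| * (1 - max p.1 p.2) +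
        (1 - max p.1 p.2) * min p.1 p.2 >
      max (min p.1 p.2 ^ 2) (max (|p.1 - p.2| ^ 2) ((1 - max p.1 p.2) ^ 2))} with hS
  -- swap symmetry of S
  have hSsym : ∀ x : ℝ × ℝ, (x.2, x.1) ∈ S ↔ x ∈ S := by
    intro x
    simp only [hS, mem_setOf_eq]
    constructor <;> rintro ⟨h1, h2, h3⟩ <;>
      exact ⟨h2, h1, by rwa [min_comm, max_comm, abs_sub_comm] at h3⟩
  have hSmeas : MeasurableSet S := by
    have h1 : Measurable fun x : ℝ×ℝ =>
        max (min x.1 x.2 ^ 2) (max (|x.1 - x.2| ^ 2) ((1 - max x.1 x.2) ^ 2)) := by fun_prop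
    have h2 : Measurable fun x : ℝ×ℝ =>
        min x.1 x.2 * |x.1 - x.2| + |x.1 - x.2| * (1 - max x.1 x.2) +
        (1 - max x.1 x.2) * min x.1 x.2 := by fun_prop
    exact (measurable_fst measurableSet_Icc).inter
      ((measurable_snd measurableSet_Icc).inter (measurableSet_lt h1 h2))
  set A1 : Set (ℝ × ℝ) := S ∩ {x | x.1 < x.2} with hA1
  set A2 : Set (ℝ × ℝ) := S ∩ {x | x.2 < x.1} with hA2
  -- A1 is the lower-triangle part; its measure equals that of bsT
  have hPhi : MeasurePreserving (fun z : ℝ × ℝ => (z.1, z.2 - z.1)) volume volume := bs_mp_shear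
  have hA1sub : A1 ⊆ (fun z : ℝ × ℝ => (z.1, z.2 - z.1)) ⁻¹' bsT := by
    rintro x ⟨hxS, hlt⟩
    simp only [mem_setOf_eq] at hlt
    obtain ⟨hx1, hx2, hcond⟩ := hxS
    simp only [mem_Icc] at hx1 hx2
    rw [min_eq_left hlt.le, max_eq_right hlt.le, abs_sub_comm, abs_of_nonneg (by linarith)]
      at hcond
    simp only [mem_preimage, bsT, mem_setOf_eq]
    rw [bs_max_lt]
    rw [gt_iff_lt, bs_max_lt] at hcond
    refine ⟨hx1.1, by linarith, by linarith, by linarith [hcond.1], by linarith [hcond.2.1],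
      by linarith [hcond.2.2]⟩
  have hA1sup : (fun z : ℝ × ℝ => (z.1, z.2 - z.1)) ⁻¹' bsT ⊆ A1 ∪ {x : ℝ×ℝ | x.2 = x.1} := by
    intro x hx
    simp only [mem_preimage, bsT, mem_setOf_eq] at hx
    obtain ⟨h1, h2, h3, h4⟩ := hx
    rcases eq_or_lt_of_le (show x.1 ≤ x.2 by linarith) with he | hlt
    · exact Or.inr he.symm
    refine Or.inl ⟨?_, hlt⟩
    rw [bs_max_lt] at h4
    simp only [hS, mem_setOf_eq, mem_Icc]
    refine ⟨⟨h1, by linarith⟩, ⟨by linarith, by linarith⟩, ?_⟩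
    rw [min_eq_left hlt.le, max_eq_right hlt.le, abs_sub_comm, abs_of_nonneg (by linarith)]
    rw [gt_iff_lt, bs_max_lt]
    refine ⟨by linarith [h4.1], by linarith [h4.2.1], by linarith [h4.2.2]⟩
  have hA1vol : volume A1 = volume bsT := by
    have hpre : volume ((fun z : ℝ × ℝ => (z.1, z.2 - z.1)) ⁻¹' bsT) = volume bsT :=
      hPhi.measure_preimage bsT_meas.nullMeasurableSet
    apply le_antisymm
    · rw [← hpre]; exact measure_mono hA1sub
    · rw [← hpre]
      calc volume ((fun z : ℝ × ℝ => (z.1, z.2 - z.1)) ⁻¹' bsT)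
          ≤ volume (A1 ∪ {x : ℝ×ℝ | x.2 = x.1}) := measure_mono hA1sup
        _ = volume A1 := bs_union_null
            (by simpa using bs_graph_null (fun t => t) measurable_id)
  have hA2eq : A2 = Prod.swap ⁻¹' A1 := by
    ext x
    simp only [hA2, hA1, mem_inter_iff, mem_preimage, mem_setOf_eq, Prod.fst_swap, Prod.snd_swap]
    rw [show (Prod.swap x ∈ S) = ((x.2, x.1) ∈ S) from rfl, hSsym]
  have hA2vol : volume A2 = volume A1 := by
    rw [hA2eq]
    exact bs_mp_swap.measure_preimage
      (hSmeas.inter (measurableSet_lt measurable_fst measurable_snd)).nullMeasurableSet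
  -- decompose S
  have hSvol : volume S = volume A1 + volume A2 := by
    apply le_antisymm
    · have hsub : S ⊆ A1 ∪ A2 ∪ {x : ℝ×ℝ | x.2 = x.1} := by
        intro x hx
        rcases lt_trichotomy x.1 x.2 with h | h | h
        · exact Or.inl (Or.inl ⟨hx, h⟩)
        · exact Or.inr h.symm
        · exact Or.inl (Or.inr ⟨hx, h⟩)
      calc volume S ≤ volume (A1 ∪ A2 ∪ {x : ℝ×ℝ | x.2 = x.1}) := measure_mono hsub
        _ = volume (A1 ∪ A2) := bs_union_null
            (by simpa using bs_graph_null (fun t => t) measurable_id)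
        _ ≤ volume A1 + volume A2 := measure_union_le _ _
    · have hdisj : Disjoint A1 A2 := by
        rw [Set.disjoint_left]
        rintro x ⟨_, h1⟩ ⟨_, h2⟩
        simp only [mem_setOf_eq] at h1 h2
        exact absurd h2 (not_lt.mpr h1.le)
      rw [← measure_union hdisj (hSmeas.inter (measurableSet_lt measurable_snd measurable_fst))]
      exact measure_mono (union_subset inter_subset_left inter_subset_left)
  rw [hSvol, hA2vol, hA1vol, bsT_vol]
  have he : (0:ℝ) ≤ 1/24 + (4*Real.sqrt 7/49 * Real.arcsin (Real.sqrt 14/8) - 5/56) :=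
    add_nonneg (by norm_num) bs_c_nonneg
  rw [← ENNReal.ofReal_add he he, ← ENNReal.ofReal_add (add_nonneg he he) he,
    ← ENNReal.ofReal_add (add_nonneg (add_nonneg he he) he) (add_nonneg (add_nonneg he he) he)]
  congr 1
  ring
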